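/- Let M be a matrix with nonnegative entries all of whose 2×2 minors are nonnegative (rows/columns indexed by positive integers, with only finitely many nonzero entries in play so that M·v is well-defined). Then for admissible vectors v, w with v ≼ w, one has M·v ≼ M·w, where ≼ is the cross-product relation: a ≼ b iff a(i)·b(j) ≥ a(j)·b(i) for all i ≤ j. -/
import Mathlib


/-- A vector `v : ℕ → ℕ` is admissible if it has finite (bounded) support and its
support is an interval. -/
def Admissible (v : ℕ → ℕ) : Prop :=
  {i | v i ≠ 0}.Finite ∧
  ∀ i j k : ℕ, i ≤ j → j ≤ k → v i ≠ 0 → v k ≠ 0 → v j ≠ 0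

/-- The cross–product relation `v ≼ w`: `v(i)·w(j) ≥ v(j)·w(i)` for all `i ≤ j`. -/
def CPRel (v w : ℕ → ℕ) : Prop := ∀ i j : ℕ, i ≤ j → v j * w i ≤ v i * w j

/-- If all `2×2` minors of the (entrywise nonnegative) matrix `M` are nonnegative,
then `M` preserves the cross–product relation on admissible vectors. -/
theorem matrix_preserves_cprel (M : ℕ → ℕ → ℕ)
    (hM : ∀ i j k l : ℕ, i ≤ j → k ≤ l → M j k * M i l ≤ M i k * M j l)
    (v w : ℕ → ℕ) (hv : Admissible v) (hw : Admissible w) (hvw : CPRel v w) :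
    CPRel (fun i => ∑ᶠ t, M i t * v t) (fun i => ∑ᶠ t, M i t * w t) := by
  classical
  intro i j hij
  set S : Finset ℕ := hv.1.toFinset ∪ hw.1.toFinset with hS
  have hvs : ∀ k : ℕ, ∑ᶠ t, M k t * v t = ∑ t ∈ S, M k t * v t := by
    intro k
    apply finsum_eq_finset_sum_of_support_subset
    intro t ht
    have hvt : v t ≠ 0 := by
      intro h
      simp [Function.mem_support, h] at ht
    simp [hS, Set.Finite.mem_toFinset]
    exact Or.inl hvt
  have hws : ∀ k : ℕ, ∑ᶠ t, M k t * w t = ∑ t ∈ S, M k t * w t := by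
    intro k
    apply finsum_eq_finset_sum_of_support_subset
    intro t ht
    have hwt : w t ≠ 0 := by
      intro h
      simp [Function.mem_support, h] at ht
    simp [hS, Set.Finite.mem_toFinset]
    exact Or.inr hwt
  simp only [hvs, hws]
  set F : ℕ → ℕ → ℕ := fun t s => (M j t * v t) * (M i s * w s) with hF
  set G : ℕ → ℕ → ℕ := fun t s => (M i t * v t) * (M j s * w s) with hG
  have key : ∀ t s : ℕ, t ≤ s → F t s + F s t ≤ G t s + G s t := by
    intro t s hts
    have h1 := mul_add_mul_le_mul_add_mul (hM i j t s hij hts) (hvw t s hts)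
    calc F t s + F s t = (M j t * M i s) * (v t * w s) + (M i t * M j s) * (v s * w t) := by
          simp only [hF]; ring
      _ ≤ (M j t * M i s) * (v s * w t) + (M i t * M j s) * (v t * w s) := h1
      _ = G t s + G s t := by simp only [hG]; ring
  have key' : ∀ t s : ℕ, F t s + F s t ≤ G t s + G s t := by
    intro t s
    rcases le_total t s with h | h
    · exact key t s h
    · have := key s t h; omega
  have h2 : ∑ t ∈ S, ∑ s ∈ S, (F t s + F s t) ≤ ∑ t ∈ S, ∑ s ∈ S, (G t s + G s t) :=
    Finset.sum_le_sum fun t _ => Finset.sum_le_sum fun s _ => key' t s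
  have hsym : ∀ (H : ℕ → ℕ → ℕ), ∑ t ∈ S, ∑ s ∈ S, (H t s + H s t)
      = 2 * ∑ t ∈ S, ∑ s ∈ S, H t s := by
    intro H
    rw [two_mul]
    simp only [Finset.sum_add_distrib]
    rw [Finset.sum_comm (f := fun t s => H s t)]
  rw [hsym F, hsym G] at h2
  have hFsum : ∑ t ∈ S, ∑ s ∈ S, F t s
      = (∑ t ∈ S, M j t * v t) * (∑ s ∈ S, M i s * w s) := by
    rw [Finset.sum_mul_sum]
  have hGsum : ∑ t ∈ S, ∑ s ∈ S, G t s
      = (∑ t ∈ S, M i t * v t) * (∑ s ∈ S, M j s * w s) := by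
    rw [Finset.sum_mul_sum]
  rw [hFsum, hGsum] at h2
  omega
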